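/- Let λ ≠ 0, let x, x̃ : ℤ/Nℤ → ℝ with x̃_k ≠ x_k and x_k ≠ x̃_{k−1} for all k, and define p : ℤ/Nℤ → ℝ by p_k = λ/(x̃_k−x_k) + λ/(x_k−x̃_{k−1}). Then the monodromy matrix T = L_{N−1}·L_{N−2}·⋯·L_1·L_0 satisfies T · (x̃_{−1}, 1)ᵀ = (∏_{k∈ℤ/Nℤ} (x̃_{k−1}−x_k)/(x̃_k−x_k)) · (x̃_{−1}, 1)ᵀ; in particular, ∏_{k∈ℤ/Nℤ}(x̃_{k−1}−x_k)/(x̃_k−x_k) is an eigenvalue of T. -/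

import Mathlib

/-- Transition matrix of the zero curvature representation of the Bäcklund
transformation for the symmetric rational additive Toda-type system. -/
noncomputable def ratAddTodaL (N : ℕ) (lam : ℝ) (x p : ZMod N → ℝ) (i : ℕ) :
    Matrix (Fin 2) (Fin 2) ℝ :=
  1 + lam⁻¹ • !![p (i : ZMod N) * x (i : ZMod N), -(p (i : ZMod N) * x (i : ZMod N) ^ 2);
                 p (i : ZMod N), -(p (i : ZMod N) * x (i : ZMod N))]

/-- Monodromy matrix `T = L_{N-1} ⬝ ⋯ ⬝ L_1 ⬝ L_0`. -/
noncomputable def ratAddTodaT (N : ℕ) (lam : ℝ) (x p : ZMod N → ℝ) :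
    Matrix (Fin 2) (Fin 2) ℝ :=
  ((List.range N).reverse.map (ratAddTodaL N lam x p)).prod

lemma ratAddTodaL_mulVec
    (N : ℕ) (lam : ℝ) (hlam : lam ≠ 0) (x xt p : ZMod N → ℝ)
    (hx1 : ∀ k : ZMod N, xt k ≠ x k) (hx2 : ∀ k : ZMod N, x k ≠ xt (k - 1))
    (hp : ∀ k : ZMod N, p k = lam / (xt k - x k) + lam / (x k - xt (k - 1)))
    (n : ℕ) :
    (ratAddTodaL N lam x p n).mulVec ![xt ((n : ZMod N) - 1), 1] =
      ((xt ((n : ZMod N) - 1) - x (n : ZMod N)) / (xt (n : ZMod N) - x (n : ZMod N))) •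
        ![xt (n : ZMod N), 1] := by
  set k : ZMod N := (n : ZMod N)
  have h1 : xt k - x k ≠ 0 := sub_ne_zero.mpr (hx1 k)
  have h2 : x k - xt (k - 1) ≠ 0 := sub_ne_zero.mpr (hx2 k)
  have h1'' : xt (n : ZMod N) - x (n : ZMod N) ≠ 0 := h1
  have h2'' : x (n : ZMod N) - xt ((n : ZMod N) - 1) ≠ 0 := h2
  funext i
  fin_cases i <;>
    simp [ratAddTodaL, Matrix.mulVec, dotProduct, Fin.sum_univ_two, hp k,
      Matrix.one_apply, k] <;>
    field_simp <;> ring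

lemma ratAddTodaT_partial
    (N : ℕ) (lam : ℝ) (hlam : lam ≠ 0) (x xt p : ZMod N → ℝ)
    (hx1 : ∀ k : ZMod N, xt k ≠ x k) (hx2 : ∀ k : ZMod N, x k ≠ xt (k - 1))
    (hp : ∀ k : ZMod N, p k = lam / (xt k - x k) + lam / (x k - xt (k - 1)))
    (n : ℕ) :
    (((List.range n).reverse.map (ratAddTodaL N lam x p)).prod).mulVec
        ![xt ((0 : ZMod N) - 1), 1] =
      (∏ i ∈ Finset.range n,
          (xt ((i : ZMod N) - 1) - x (i : ZMod N)) / (xt (i : ZMod N) - x (i : ZMod N))) •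
        ![xt ((n : ZMod N) - 1), 1] := by
  induction n with
  | zero => simp
  | succ n ih =>
    have hrange : (List.range (n + 1)).reverse = n :: (List.range n).reverse := by
      rw [List.range_succ, List.reverse_append]; simp
    rw [hrange, List.map_cons, List.prod_cons, ← Matrix.mulVec_mulVec, ih,
      Matrix.mulVec_smul]
    have hk : ((n + 1 : ℕ) : ZMod N) - 1 = (n : ZMod N) := by push_cast; ring
    rw [ratAddTodaL_mulVec N lam hlam x xt p hx1 hx2 hp n, smul_smul,
      Finset.prod_range_succ, hk, mul_comm]

/-- For the periodic symmetric rational additive Toda-type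
system, `∏ (x̃_{k−1} − x_k)/(x̃_k − x_k)` is an eigenvalue of the monodromy
matrix, with eigenvector `(x̃_{−1}, 1)ᵀ`. -/
theorem ratAddToda_monodromy_eigenvalue
    (N : ℕ) [NeZero N] (lam : ℝ) (hlam : lam ≠ 0) (x xt p : ZMod N → ℝ)
    (hx1 : ∀ k : ZMod N, xt k ≠ x k) (hx2 : ∀ k : ZMod N, x k ≠ xt (k - 1))
    (hp : ∀ k : ZMod N, p k = lam / (xt k - x k) + lam / (x k - xt (k - 1))) :
    (ratAddTodaT N lam x p).mulVec ![xt (-1), 1] =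
      (∏ k : ZMod N, (xt (k - 1) - x k) / (xt k - x k)) • ![xt (-1), 1] ∧
    Module.End.HasEigenvalue (Matrix.toLin' (ratAddTodaT N lam x p))
      (∏ k : ZMod N, (xt (k - 1) - x k) / (xt k - x k)) := by
  have hbij : Function.Bijective (fun i : Fin N => ((i : ℕ) : ZMod N)) := by
    constructor
    · intro a b h
      have ha : (((a : ℕ) : ZMod N)).val = a := ZMod.val_natCast_of_lt a.isLt
      have hb : (((b : ℕ) : ZMod N)).val = b := ZMod.val_natCast_of_lt b.isLt
      ext
      rw [← ha, ← hb]
      exact congrArg ZMod.val h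
    · intro k
      exact ⟨⟨k.val, ZMod.val_lt k⟩, ZMod.natCast_rightInverse k⟩
  have hprod : (∏ i ∈ Finset.range N,
      (xt ((i : ZMod N) - 1) - x (i : ZMod N)) / (xt (i : ZMod N) - x (i : ZMod N))) =
      ∏ k : ZMod N, (xt (k - 1) - x k) / (xt k - x k) := by
    rw [← Fin.prod_univ_eq_prod_range]
    exact Fintype.prod_bijective _ hbij _ _ (fun i => rfl)
  have hN : ((N : ℕ) : ZMod N) - 1 = -1 := by simp
  have h0 : ((0 : ZMod N)) - 1 = -1 := by ring
  have hmain := ratAddTodaT_partial N lam hlam x xt p hx1 hx2 hp N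
  rw [hN, h0, hprod] at hmain
  refine ⟨hmain, ?_⟩
  refine Module.End.hasEigenvalue_of_hasEigenvector (x := ![xt (-1), 1]) ⟨?_, ?_⟩
  · rw [Module.End.mem_eigenspace_iff, Matrix.toLin'_apply]
    exact hmain
  · intro h
    have := congrFun h 1
    simp at this
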